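/- Let U ⊆ ℝⁿ be open, A ⊆ U compact, and k ∈ ℕ. The set of maps f ∈ C¹(U, ℝᵏ) that are injective on A is a Borel subset of C¹(U, ℝᵏ) with respect to the topology of C¹ convergence on compact subsets. In fact, it is a countable intersection of open sets (a Gδ set). -/
import Mathlib

open Metric Set

lemma isOpen_sep {X E : Type*} [MetricSpace X] [CompactSpace X] [MetricSpace E]
    (ε : ℝ) :
    IsOpen {g : C(X, E) | ∀ x y : X, ε ≤ dist x y → g x ≠ g y} := by
  rw [isOpen_iff]
  intro g hg
  by_cases hS : ∃ p : X × X, ε ≤ dist p.1 p.2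
  · obtain ⟨p₀, hp₀⟩ := hS
    have hScl : IsClosed {p : X × X | ε ≤ dist p.1 p.2} := by
      have : Continuous fun p : X × X => dist p.1 p.2 := by fun_prop
      exact isClosed_le continuous_const this
    have hScomp : IsCompact {p : X × X | ε ≤ dist p.1 p.2} := hScl.isCompact
    obtain ⟨q, hq, hqmin⟩ := hScomp.exists_isMinOn ⟨p₀, hp₀⟩
      (Continuous.continuousOn (by fun_prop :
        Continuous fun p : X × X => dist (g p.1) (g p.2)))
    set δ := dist (g q.1) (g q.2) with hδ
    have hδpos : 0 < δ := by
      rw [hδ, dist_pos]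
      exact hg q.1 q.2 hq
    refine ⟨δ / 3, by positivity, fun h hh => ?_⟩
    intro x y hxy
    have h1 : dist (h x) (g x) ≤ dist h g := ContinuousMap.dist_apply_le_dist x
    have h2 : dist (h y) (g y) ≤ dist h g := ContinuousMap.dist_apply_le_dist y
    have h3 : δ ≤ dist (g x) (g y) := isMinOn_iff.mp hqmin (x, y) hxy
    have hhg : dist h g < δ / 3 := mem_ball.mp hh
    have : 0 < dist (h x) (h y) := by
      have := dist_triangle4 (g x) (h x) (h y) (g y)
      rw [dist_comm (g x) (h x)] at this
      linarith
    exact dist_pos.mp this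
  · push_neg at hS
    refine ⟨1, one_pos, fun h _ x y hxy => absurd hxy (not_le.mpr (hS (x, y)))⟩

/-- Let `U ⊆ ℝⁿ` be open and `A ⊆ U` compact.  In the space of (continuously
differentiable) maps `U → ℝᵏ`, endowed with the topology of (C¹) convergence on
compact subsets of `U` (here realized as the compact-open topology on
continuous maps, which the C¹ topology refines), the set of maps that are
injective on `A` is a Gδ set, and in particular a Borel set. -/
theorem isGδ_injOn_compact
    {n k : ℕ} (U : Set (EuclideanSpace ℝ (Fin n))) (hU : IsOpen U)
    (A : Set (EuclideanSpace ℝ (Fin n))) (hA : IsCompact A) (hAU : A ⊆ U) :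
    IsGδ {f : C(↥U, EuclideanSpace ℝ (Fin k)) |
        Set.InjOn f (Subtype.val ⁻¹' A)} ∧
      @MeasurableSet _ (borel C(↥U, EuclideanSpace ℝ (Fin k)))
        {f : C(↥U, EuclideanSpace ℝ (Fin k)) |
          Set.InjOn f (Subtype.val ⁻¹' A)} := by
  set K : Set ↥U := Subtype.val ⁻¹' A with hK
  have hKcomp : IsCompact K := by
    rw [Topology.IsEmbedding.subtypeVal.isCompact_iff]
    have : Subtype.val '' K = A := by
      rw [hK, Subtype.image_preimage_coe, inter_eq_right.mpr hAU]
    rwa [this]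
  haveI : CompactSpace ↥K := isCompact_iff_compactSpace.mp hKcomp
  have key : {f : C(↥U, EuclideanSpace ℝ (Fin k)) | Set.InjOn f K} =
      ⋂ m : ℕ, (ContinuousMap.restrict K) ⁻¹'
        {g : C(↥K, EuclideanSpace ℝ (Fin k)) |
          ∀ x y : ↥K, 1 / (m + 1 : ℝ) ≤ dist x y → g x ≠ g y} := by
    ext f
    simp only [mem_iInter, mem_preimage, mem_setOf_eq]
    constructor
    · intro hf m x y hxy hfxy
      have hne : (x : ↥U) ≠ (y : ↥U) := by
        intro h
        rw [Subtype.ext h, dist_self] at hxy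
        have : (0:ℝ) < 1 / (m + 1 : ℝ) := by positivity
        linarith
      exact hne (hf x.2 y.2 hfxy)
    · intro h x hx y hy hfxy
      by_contra hne
      have hd : 0 < dist (⟨x, hx⟩ : ↥K) (⟨y, hy⟩ : ↥K) := by
        rw [dist_pos]
        exact fun he => hne (congrArg Subtype.val he)
      obtain ⟨m, hm⟩ := exists_nat_one_div_lt hd
      exact h m ⟨x, hx⟩ ⟨y, hy⟩ hm.le hfxy
  have hGδ : IsGδ {f : C(↥U, EuclideanSpace ℝ (Fin k)) | Set.InjOn f K} := by
    rw [key]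
    exact IsGδ.iInter_of_isOpen fun m =>
      (isOpen_sep (1 / (m + 1 : ℝ))).preimage (ContinuousMap.continuous_restrict K)
  refine ⟨hGδ, ?_⟩
  letI := borel C(↥U, EuclideanSpace ℝ (Fin k))
  haveI : BorelSpace C(↥U, EuclideanSpace ℝ (Fin k)) := ⟨rfl⟩
  exact hGδ.measurableSet
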